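/- Let Σ be a finite alphabet, B a Boolean subalgebra of P(Σ*) closed under quotients, and let B⊕2 denote the Boolean subalgebra of P(Σ*) generated by B together with all languages LaΣ* for L ∈ B and a ∈ Σ. Then every language K ∈ B⊕2 satisfies every ultrafilter equation in E(B⊕2): for every pair (μ, ν) ∈ E(B⊕2), K ∈ μ if and only if K ∈ ν. -/
import Mathlib


/-- `B ⊆ P(Σ*)` is a Boolean subalgebra: it contains the top element and is closed
under complements and finite unions. -/
def IsBoolSubalg {A : Type*} (B : Set (Set (List A))) : Prop :=
  Set.univ ∈ B ∧ (∀ L ∈ B, Lᶜ ∈ B) ∧ (∀ L ∈ B, ∀ L' ∈ B, L ∪ L' ∈ B)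

/-- `B` is closed under left and right quotients by words. -/
def QuotClosed {A : Type*} (B : Set (Set (List A))) : Prop :=
  ∀ L ∈ B, ∀ w : List A,
    {u : List A | w ++ u ∈ L} ∈ B ∧ {u : List A | u ++ w ∈ L} ∈ B

/-- The sets belonging to the Boolean subalgebra of `P(α)` generated by `G`. -/
inductive GenBA {α : Type*} (G : Set (Set α)) : Set α → Prop
  | base {s : Set α} : s ∈ G → GenBA G s
  | univ : GenBA G Set.univ
  | compl {s : Set α} : GenBA G s → GenBA G sᶜ
  | union {s t : Set α} : GenBA G s → GenBA G t → GenBA G (s ∪ t)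

/-- The language `LaΣ* = {u·a·v : u ∈ L, v ∈ Σ*}`. -/
def LaStar {A : Type*} (L : Set (List A)) (a : A) : Set (List A) :=
  {x | ∃ u ∈ L, ∃ v : List A, x = u ++ [a] ++ v}

/-- `B ⊕ 2`: the Boolean subalgebra of `P(Σ*)` generated by `B` together with all the
languages `LaΣ*` for `L ∈ B` and `a ∈ Σ`. -/
def BPlusTwo {A : Type*} (B : Set (Set (List A))) : Set (Set (List A)) :=
  {K | GenBA (B ∪ {S | ∃ L ∈ B, ∃ a : A, S = LaStar L a}) K}

/-- `Σ*⊗ℕ`: words with a marked position. -/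
def WordPos (A : Type*) : Type _ := {p : List A × ℕ // p.2 < p.1.length}

/-- `f_a : Σ*⊗ℕ → Σ*` replaces the marked letter by `a`. -/
def fLetter {A : Type*} (a : A) (p : WordPos A) : List A := p.1.1.set p.1.2 a

/-- `f_r : Σ*⊗ℕ → Σ*` takes the prefix before the marked position. -/
def fPrefix {A : Type*} (p : WordPos A) : List A := p.1.1.take p.1.2

/-- The set `E(B⊕2)` of ultrafilter equations. -/
def EqnSet {A : Type*} (B : Set (Set (List A))) :
    Set (Ultrafilter (List A) × Ultrafilter (List A)) :=
  {μν | (∀ L ∈ B, L ∈ μν.1 ↔ L ∈ μν.2) ∧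
    (∀ (a : A) (γ : Ultrafilter (WordPos A)), μν.1 = γ.map (fLetter a) →
      ∃ δ : Ultrafilter (WordPos A), μν.2 = δ.map (fLetter a) ∧
        ∀ L ∈ B, L ∈ γ.map fPrefix ↔ L ∈ δ.map fPrefix) ∧
    (∀ (a : A) (δ : Ultrafilter (WordPos A)), μν.2 = δ.map (fLetter a) →
      ∃ γ : Ultrafilter (WordPos A), μν.1 = γ.map (fLetter a) ∧
        ∀ L ∈ B, L ∈ γ.map fPrefix ↔ L ∈ δ.map fPrefix)}

open Filter in
private lemma uf_mem_iff_inter {α : Type*} (μ : Ultrafilter α) {E S : Set α} (hE : E ∈ μ) :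
    S ∈ μ ↔ S ∩ E ∈ μ :=
  ⟨fun h => inter_mem h hE, fun h => mem_of_superset h Set.inter_subset_left⟩

open Filter in
private lemma laStar_sound {A : Type*} {B : Set (Set (List A))} {L : Set (List A)} (hL : L ∈ B)
    (a : A) (μ ν : Ultrafilter (List A))
    (h2 : ∀ (γ : Ultrafilter (WordPos A)), μ = γ.map (fLetter a) →
      ∃ δ : Ultrafilter (WordPos A), ν = δ.map (fLetter a) ∧
        ∀ L' ∈ B, L' ∈ γ.map fPrefix ↔ L' ∈ δ.map fPrefix)
    (hmem : LaStar L a ∈ μ) : LaStar L a ∈ ν := by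
  have hwit : ∀ w ∈ LaStar L a, ∃ p : WordPos A, fLetter a p = w ∧ fPrefix p ∈ L := by
    rintro w ⟨u, hu, v, rfl⟩
    refine ⟨⟨(u ++ [a] ++ v, u.length), by simp⟩, ?_, ?_⟩
    · show (u ++ [a] ++ v).set u.length a = u ++ [a] ++ v
      simp [List.set_append]
    · show (u ++ [a] ++ v).take u.length ∈ L
      simpa [List.take_append] using hu
  obtain ⟨w₀, hw₀⟩ := μ.nonempty_of_mem hmem
  obtain ⟨p₀, -, -⟩ := hwit w₀ hw₀
  classical
  set g : List A → WordPos A := fun w => if h : w ∈ LaStar L a then (hwit w h).choose else p₀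
    with hg
  set γ : Ultrafilter (WordPos A) := μ.map g with hγ
  have hfix : ∀ w ∈ LaStar L a, fLetter a (g w) = w ∧ fPrefix (g w) ∈ L := by
    intro w hw
    rw [hg]; simp only [dif_pos hw]
    exact (hwit w hw).choose_spec
  have hmap : μ = γ.map (fLetter a) := by
    refine Ultrafilter.coe_injective (Filter.ext fun S => ?_)
    show S ∈ μ ↔ S ∈ γ.map (fLetter a)
    rw [Ultrafilter.mem_map, hγ, Ultrafilter.mem_map]
    show S ∈ μ ↔ g ⁻¹' (fLetter a ⁻¹' S) ∈ μ
    rw [uf_mem_iff_inter μ hmem, uf_mem_iff_inter μ hmem (S := g ⁻¹' (fLetter a ⁻¹' S))]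
    congr! 1
    ext w
    simp only [Set.mem_inter_iff, Set.mem_preimage]
    constructor
    · rintro ⟨hS, hw⟩; exact ⟨by rw [(hfix w hw).1]; exact hS, hw⟩
    · rintro ⟨hS, hw⟩; exact ⟨by rw [(hfix w hw).1] at hS; exact hS, hw⟩
  obtain ⟨δ, hδ, hiff⟩ := h2 γ hmap
  have hLγ : L ∈ γ.map fPrefix := by
    rw [Ultrafilter.mem_map, hγ]
    show g ⁻¹' (fPrefix ⁻¹' L) ∈ μ
    exact mem_of_superset hmem fun w hw => (hfix w hw).2
  have hLδ : L ∈ δ.map fPrefix := (hiff L hL).mp hLγ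
  rw [hδ, Ultrafilter.mem_map]
  rw [Ultrafilter.mem_map] at hLδ
  refine mem_of_superset hLδ ?_
  rintro ⟨⟨w, i⟩, hi⟩ hp
  show w.set i a ∈ LaStar L a
  refine ⟨w.take i, hp, w.drop (i+1), ?_⟩
  rw [List.set_eq_take_append_cons_drop]
  simp [hi]

/-- Soundness: every language in `B⊕2` satisfies every ultrafilter equation in `E(B⊕2)`. -/
theorem stmt11 {A : Type*} [Fintype A] (B : Set (Set (List A)))
    (hB : IsBoolSubalg B) (hq : QuotClosed B) :
    ∀ K ∈ BPlusTwo B, ∀ μν ∈ EqnSet B, (K ∈ μν.1 ↔ K ∈ μν.2) := by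
  intro K hK μν hμν
  obtain ⟨h1, h2, h3⟩ := hμν
  induction hK with
  | base h =>
    rcases h with h | ⟨L, hL, a, rfl⟩
    · exact h1 _ h
    · constructor
      · exact laStar_sound hL a μν.1 μν.2 (h2 a)
      · intro h
        exact laStar_sound hL a μν.2 μν.1
          (fun δ hδ => by
            obtain ⟨γ, hγ, hiff⟩ := h3 a δ hδ
            exact ⟨γ, hγ, fun L' hL' => (hiff L' hL').symm⟩) h
  | univ => exact iff_of_true Filter.univ_mem Filter.univ_mem
  | compl _ ih => simp [Ultrafilter.compl_mem_iff_notMem, ih]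
  | union _ _ ih1 ih2 => simp [Ultrafilter.union_mem_iff, ih1, ih2]
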